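/- Every spatial congestion game with exactly two resources, an undirected interference graph, and non-increasing user-specific payoff functions has the finite improvement property: there is no infinite sequence of asynchronous strict improvement steps; equivalently no sequence of strict improvement steps returns to its starting strategy profile. -/

import Mathlib

open scoped Classical

/-- Number of neighbors of `i` in `G` choosing resource `r` under profile `σ`. -/
noncomputable def nbrCount {ι : Type*} [Fintype ι]
    (G : SimpleGraph ι) (σ : ι → Bool) (i : ι) (r : Bool) : ℕ :=
  (Finset.univ.filter (fun j => G.Adj i j ∧ σ j = r)).card

/-- Payoff of player `i` in the two-resource spatial congestion game. -/
noncomputable def scgPayoff {ι : Type*} [Fintype ι]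
    (G : SimpleGraph ι) (g : ι → Bool → ℕ → ℤ) (σ : ι → Bool) (i : ι) : ℤ :=
  g i (σ i) (nbrCount G σ i (σ i) + 1)

/-- A strict improvement step: one player unilaterally changes its resource and strictly
increases its payoff. -/
def Improves {ι : Type*} [Fintype ι]
    (G : SimpleGraph ι) (g : ι → Bool → ℕ → ℤ) (σ σ' : ι → Bool) : Prop :=
  ∃ i : ι, (∀ j, j ≠ i → σ' j = σ j) ∧ scgPayoff G g σ i < scgPayoff G g σ' i

section Aux

variable {ι : Type*} [Fintype ι] (G : SimpleGraph ι) (g : ι → Bool → ℕ → ℤ)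

noncomputable def scgDeg (i : ι) : ℕ := (Finset.univ.filter (fun j => G.Adj i j)).card

noncomputable def Dfun (i : ι) (k : ℕ) : ℤ :=
  g i true (k + 1) - g i false (scgDeg G i - k + 1)

noncomputable def tau (i : ι) : ℕ :=
  ((Finset.range (scgDeg G i + 1)).filter (fun k => 0 < Dfun G g i k)).card

noncomputable def tau' (i : ι) : ℕ :=
  ((Finset.range (scgDeg G i + 1)).filter (fun k => 0 ≤ Dfun G g i k)).card

noncomputable def zc (σ : ι → Bool) (i : ι) (r : Bool) : ℤ :=
  ∑ l, (if G.Adj i l ∧ σ l = r then (1:ℤ) else 0)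

noncomputable def Phi (σ : ι → Bool) : ℤ :=
  ∑ j, (if σ j = true then
    3 * (zc G σ j true - ((tau G g j : ℤ) + (tau' G g j : ℤ))) + 1 else 0)

lemma zc_eq_nbr (σ : ι → Bool) (i : ι) (r : Bool) :
    ((nbrCount G σ i r : ℤ)) = zc G σ i r := by
  rw [nbrCount, zc, Finset.card_filter]
  push_cast
  rfl

lemma nbr_add (σ : ι → Bool) (i : ι) :
    nbrCount G σ i true + nbrCount G σ i false = scgDeg G i := by
  classical
  rw [nbrCount, nbrCount, scgDeg]
  have h1 : Finset.univ.filter (fun j => G.Adj i j ∧ σ j = true)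
      = (Finset.univ.filter (fun j => G.Adj i j)).filter (fun j => σ j = true) := by
    rw [Finset.filter_filter]
  have h2 : Finset.univ.filter (fun j => G.Adj i j ∧ σ j = false)
      = (Finset.univ.filter (fun j => G.Adj i j)).filter (fun j => ¬ (σ j = true)) := by
    rw [Finset.filter_filter]
    apply Finset.filter_congr
    intro j _
    simp
  rw [h1, h2, Finset.card_filter_add_card_filter_not]

lemma Dfun_anti (hg : ∀ i r, Antitone (g i r)) (i : ι) : Antitone (Dfun G g i) := by
  intro j k hjk
  have h1 : g i true (k + 1) ≤ g i true (j + 1) := hg i true (by omega)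
  have h2 : g i false (scgDeg G i - j + 1) ≤ g i false (scgDeg G i - k + 1) :=
    hg i false (by omega)
  simp only [Dfun]
  omega

lemma lt_tau_of_pos (hg : ∀ i r, Antitone (g i r)) (i : ι) (k : ℕ)
    (hk : k ≤ scgDeg G i) (hD : 0 < Dfun G g i k) : k < tau G g i ∧ k < tau' G g i := by
  have hsub : Finset.range (k+1) ⊆
      (Finset.range (scgDeg G i + 1)).filter (fun m => 0 < Dfun G g i m) := by
    intro m hm
    simp only [Finset.mem_range] at hm
    simp only [Finset.mem_filter, Finset.mem_range]
    exact ⟨by omega, lt_of_lt_of_le hD (Dfun_anti G g hg i (by omega))⟩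
  have h1 : k + 1 ≤ tau G g i := by
    have := Finset.card_le_card hsub
    simpa [tau] using this
  have h2 : tau G g i ≤ tau' G g i := by
    apply Finset.card_le_card
    intro m hm
    simp only [Finset.mem_filter] at hm ⊢
    exact ⟨hm.1, le_of_lt hm.2⟩
  constructor <;> omega

lemma tau'_le_of_neg (hg : ∀ i r, Antitone (g i r)) (i : ι) (k : ℕ)
    (hD : Dfun G g i k < 0) : tau G g i ≤ k ∧ tau' G g i ≤ k := by
  have hsub : (Finset.range (scgDeg G i + 1)).filter (fun m => 0 ≤ Dfun G g i m) ⊆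
      Finset.range k := by
    intro m hm
    simp only [Finset.mem_filter, Finset.mem_range] at hm
    simp only [Finset.mem_range]
    by_contra hmk
    have : Dfun G g i m ≤ Dfun G g i k := Dfun_anti G g hg i (by omega)
    omega
  have h2 : tau' G g i ≤ k := by
    have := Finset.card_le_card hsub
    simpa [tau'] using this
  have h1 : tau G g i ≤ tau' G g i := by
    apply Finset.card_le_card
    intro m hm
    simp only [Finset.mem_filter] at hm ⊢
    exact ⟨hm.1, le_of_lt hm.2⟩
  constructor <;> omega

lemma nbr_le_deg (σ : ι → Bool) (i : ι) : nbrCount G σ i true ≤ scgDeg G i := by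
  have := nbr_add G σ i; omega

-- zc of i is unchanged by a change at i only (others equal)
lemma zc_self_invariant (σ σ' : ι → Bool) (i : ι) (h : ∀ j, j ≠ i → σ' j = σ j)
    (r : Bool) : zc G σ' i r = zc G σ i r := by
  unfold zc
  apply Finset.sum_congr rfl
  intro l _
  by_cases hl : l = i
  · subst hl; simp [G.irrefl]
  · rw [h l hl]

lemma nbr_invariant (σ σ' : ι → Bool) (i : ι) (h : ∀ j, j ≠ i → σ' j = σ j)
    (r : Bool) : nbrCount G σ' i r = nbrCount G σ i r := by
  have := zc_self_invariant G σ σ' i h r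
  have h1 := zc_eq_nbr G σ i r
  have h2 := zc_eq_nbr G σ' i r
  omega

-- cross term: sum over all j of (if σ j = true then (if Adj j i then 1 else 0) else 0) = zc σ i true
lemma cross_sum (σ : ι → Bool) (i : ι) :
    ∑ j, (if σ j = true then (if G.Adj j i then (1:ℤ) else 0) else 0) = zc G σ i true := by
  unfold zc
  apply Finset.sum_congr rfl
  intro j _
  by_cases hA : G.Adj i j
  · have : G.Adj j i := G.adj_symm hA
    by_cases hs : σ j = true <;> simp [hA, this, hs]
  · have : ¬ G.Adj j i := fun h => hA (G.adj_symm h)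
    by_cases hs : σ j = true <;> simp [hA, this, hs]

lemma phi_decrease (hg : ∀ i r, Antitone (g i r)) (σ σ' : ι → Bool)
    (h : Improves G g σ σ') : Phi G g σ' < Phi G g σ := by
  obtain ⟨i, hfix, himp⟩ := h
  -- σ' i ≠ σ i
  have hne : σ' i ≠ σ i := by
    intro heq
    have : σ' = σ := by
      funext j
      by_cases hj : j = i
      · subst hj; exact heq
      · exact hfix j hj
    rw [this] at himp; exact lt_irrefl _ himp
  set k := nbrCount G σ i true with hk
  have hkd : k ≤ scgDeg G i := nbr_le_deg G σ i
  have hzci : ∀ r, zc G σ' i r = zc G σ i r := zc_self_invariant G σ σ' i hfix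
  have hnbi : ∀ r, nbrCount G σ' i r = nbrCount G σ i r := nbr_invariant G σ σ' i hfix
  have hdk : nbrCount G σ i false = scgDeg G i - k := by
    have := nbr_add G σ i; omega
  -- Phi difference decomposition
  have key : Phi G g σ' - Phi G g σ =
      ((if σ' i = true then
          3 * (zc G σ i true - ((tau G g i : ℤ) + (tau' G g i : ℤ))) + 1 else 0)
       - (if σ i = true then
          3 * (zc G σ i true - ((tau G g i : ℤ) + (tau' G g i : ℤ))) + 1 else 0))
      + (if σ' i = true then 3 * zc G σ i true else 0)
      - (if σ i = true then 3 * zc G σ i true else 0) := by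
    unfold Phi
    rw [← Finset.sum_sub_distrib]
    rw [show (Finset.univ : Finset ι) = insert i (Finset.univ.erase i) by
      rw [Finset.insert_erase (Finset.mem_univ i)]]
    rw [Finset.sum_insert (Finset.notMem_erase i _)]
    -- term at i
    have hi_term : (if σ' i = true then
          3 * (zc G σ' i true - ((tau G g i : ℤ) + (tau' G g i : ℤ))) + 1 else 0)
       - (if σ i = true then
          3 * (zc G σ i true - ((tau G g i : ℤ) + (tau' G g i : ℤ))) + 1 else 0)
       = (if σ' i = true then
          3 * (zc G σ i true - ((tau G g i : ℤ) + (tau' G g i : ℤ))) + 1 else 0)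
       - (if σ i = true then
          3 * (zc G σ i true - ((tau G g i : ℤ) + (tau' G g i : ℤ))) + 1 else 0) := by
      rw [hzci]
    rw [hi_term]
    -- terms at j ≠ i
    have hrest : ∑ j ∈ Finset.univ.erase i,
        ((if σ' j = true then
            3 * (zc G σ' j true - ((tau G g j : ℤ) + (tau' G g j : ℤ))) + 1 else 0)
         - (if σ j = true then
            3 * (zc G σ j true - ((tau G g j : ℤ) + (tau' G g j : ℤ))) + 1 else 0))
        = (if σ' i = true then 3 * zc G σ i true else 0)
          - (if σ i = true then 3 * zc G σ i true else 0) := by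
      have step : ∀ j ∈ Finset.univ.erase i,
          ((if σ' j = true then
              3 * (zc G σ' j true - ((tau G g j : ℤ) + (tau' G g j : ℤ))) + 1 else 0)
           - (if σ j = true then
              3 * (zc G σ j true - ((tau G g j : ℤ) + (tau' G g j : ℤ))) + 1 else 0))
          = (if σ j = true then (if G.Adj j i then
              3 * ((if σ' i = true then (1:ℤ) else 0) - (if σ i = true then (1:ℤ) else 0))
              else 0) else 0) := by
        intro j hj
        have hji : j ≠ i := Finset.ne_of_mem_erase hj
        have hsj : σ' j = σ j := hfix j hji
        have hzcd : zc G σ' j true - zc G σ j true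
            = (if G.Adj j i then
                ((if σ' i = true then (1:ℤ) else 0) - (if σ i = true then (1:ℤ) else 0))
               else 0) := by
          unfold zc
          rw [← Finset.sum_sub_distrib]
          rw [Finset.sum_eq_single i]
          · by_cases hA : G.Adj j i
            · simp [hA]
            · simp [hA]
          · intro l _ hl
            rw [hfix l hl]
            ring
          · simp
        rw [hsj]
        by_cases hs : σ j = true
        · simp only [hs, if_true]
          have : zc G σ' j true = zc G σ j true + (if G.Adj j i then
                ((if σ' i = true then (1:ℤ) else 0) - (if σ i = true then (1:ℤ) else 0))
               else 0) := by omega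
          rw [this]
          by_cases hA : G.Adj j i <;> simp [hA] <;> ring
        · simp [hs]
      rw [Finset.sum_congr rfl step]
      -- now evaluate the sum
      have huniv : ∑ j ∈ Finset.univ.erase i,
          (if σ j = true then (if G.Adj j i then
              3 * ((if σ' i = true then (1:ℤ) else 0) - (if σ i = true then (1:ℤ) else 0))
              else 0) else 0)
          = ∑ j, (if σ j = true then (if G.Adj j i then
              3 * ((if σ' i = true then (1:ℤ) else 0) - (if σ i = true then (1:ℤ) else 0))
              else 0) else 0) := by
        rw [show (Finset.univ : Finset ι) = insert i (Finset.univ.erase i) by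
          rw [Finset.insert_erase (Finset.mem_univ i)]]
        rw [Finset.sum_insert (Finset.notMem_erase i _)]
        simp [G.irrefl]
      rw [huniv]
      have : ∑ j, (if σ j = true then (if G.Adj j i then
              3 * ((if σ' i = true then (1:ℤ) else 0) - (if σ i = true then (1:ℤ) else 0))
              else 0) else 0)
          = 3 * ((if σ' i = true then (1:ℤ) else 0) - (if σ i = true then (1:ℤ) else 0))
            * zc G σ i true := by
        rw [← cross_sum G σ i, Finset.mul_sum]
        apply Finset.sum_congr rfl
        intro j _
        by_cases hs : σ j = true <;> by_cases hA : G.Adj j i <;> simp [hs, hA] <;> ring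
      rw [this]
      by_cases h1 : σ' i = true <;> by_cases h2 : σ i = true <;> simp [h1, h2] <;> ring
    rw [hrest]
    ring
  -- Now case on σ i
  have hzeq : zc G σ i true = (k : ℤ) := (zc_eq_nbr G σ i true).symm
  cases hσi : σ i with
  | false =>
    have hσ'i : σ' i = true := by simpa [hσi] using hne
    -- improvement gives D > 0
    have himp' : 0 < Dfun G g i k := by
      have hp1 : scgPayoff G g σ i = g i false (scgDeg G i - k + 1) := by
        rw [scgPayoff, hσi, hdk]
      have hp2 : scgPayoff G g σ' i = g i true (k + 1) := by
        rw [scgPayoff, hσ'i, hnbi, hk]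
      rw [hp1, hp2] at himp
      simp only [Dfun]
      omega
    obtain ⟨ht, ht'⟩ := lt_tau_of_pos G g hg i k hkd himp'
    rw [hσi, hσ'i] at key
    simp only [if_true, Bool.false_eq_true, if_false] at key
    rw [hzeq] at key
    have : Phi G g σ' - Phi G g σ = 6 * (k:ℤ) - 3 * ((tau G g i : ℤ) + (tau' G g i : ℤ)) + 1 := by
      rw [key]; ring
    omega
  | true =>
    have hσ'i : σ' i = false := by simpa [hσi] using hne
    have himp' : Dfun G g i k < 0 := by
      have hp1 : scgPayoff G g σ i = g i true (k + 1) := by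
        rw [scgPayoff, hσi, hk]
      have hp2 : scgPayoff G g σ' i = g i false (scgDeg G i - k + 1) := by
        rw [scgPayoff, hσ'i, hnbi, hdk]
      rw [hp1, hp2] at himp
      simp only [Dfun]
      omega
    obtain ⟨ht, ht'⟩ := tau'_le_of_neg G g hg i k himp'
    rw [hσi, hσ'i] at key
    simp only [if_true, Bool.false_eq_true, if_false] at key
    rw [hzeq] at key
    have : Phi G g σ' - Phi G g σ = 3 * ((tau G g i : ℤ) + (tau' G g i : ℤ)) - 6 * (k:ℤ) - 1 := by
      rw [key]; ring
    omega

end Aux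

/-- Every spatial congestion game with exactly two resources, an undirected interference
graph and non-increasing user-specific payoff functions has the finite improvement property:
there is no infinite sequence of strict improvement steps, and equivalently no finite
sequence of strict improvement steps returns to its starting profile. -/
theorem fip_two_resources {ι : Type*} [Fintype ι] (G : SimpleGraph ι)
    (g : ι → Bool → ℕ → ℤ) (hg : ∀ i r, Antitone (g i r)) :
    (¬ ∃ f : ℕ → (ι → Bool), ∀ n, Improves G g (f n) (f (n + 1))) ∧
    (¬ ∃ (T : ℕ) (f : ℕ → (ι → Bool)), 0 < T ∧ f 0 = f T ∧
        ∀ t < T, Improves G g (f t) (f (t + 1))) := by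
  constructor
  · rintro ⟨f, hf⟩
    have hdec : StrictAnti (fun n => Phi G g (f n)) :=
      strictAnti_nat_of_succ_lt (fun n => phi_decrease G g hg _ _ (hf n))
    obtain ⟨m, n, hmn, heq⟩ := Finite.exists_ne_map_eq_of_infinite f
    exact hmn (hdec.injective (by simp [heq]))
  · rintro ⟨T, f, hT, hcyc, hf⟩
    have hstep : ∀ t ≤ T, Phi G g (f t) + t ≤ Phi G g (f 0) := by
      intro t
      induction t with
      | zero => intro _; simp
      | succ n ih =>
        intro hn
        have h1 := ih (by omega)
        have h2 := phi_decrease G g hg _ _ (hf n (by omega))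
        push_cast
        omega
    have := hstep T le_rfl
    rw [← hcyc] at this
    omega
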